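/- Let π be a set of primes. Then the class N^π is itself an N^π-Fitting class; that is: (i) every N^π-Dnormal subgroup of a group in N^π belongs to N^π, and (ii) if M and N are N^π-Dnormal subgroups of a finite group G with G = ⟨M, N⟩ and M, N ∈ N^π, then G ∈ N^π. -/

import Mathlib

/-- A (finite) group is a `π`-group if every prime dividing its order lies in `π`. -/
def IsPiGroup (π : Set ℕ) (G : Type*) [Group G] : Prop :=
  ∀ p : ℕ, p.Prime → p ∣ Nat.card G → p ∈ π

/-- `O^π(G)`: the smallest normal subgroup of `G` whose quotient is a `π`-group
(recall that `N.index = Nat.card (G ⧸ N)`). -/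
def piResidual (π : Set ℕ) (G : Type*) [Group G] : Subgroup G :=
  ⨅ N ∈ {N : Subgroup G | N.Normal ∧ ∀ p : ℕ, p.Prime → p ∣ N.index → p ∈ π}, N

/-- `O_π(G)`: the largest normal `π`-subgroup of `G`. -/
def piCore (π : Set ℕ) (G : Type*) [Group G] : Subgroup G :=
  ⨆ N ∈ {N : Subgroup G | N.Normal ∧ IsPiGroup π N}, N

/-- `O^π(H)` for a subgroup `H ≤ G`, regarded as a subgroup of `G`. -/
def piResidualIn (π : Set ℕ) {G : Type*} [Group G] (H : Subgroup G) : Subgroup G :=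
  (piResidual π H).map H.subtype

/-- `H` is `N^π`-Dnormal in `G`: if `|π| ≤ 1` this means `H` is normal in `G`; if
`|π| ≥ 2` it means that `O^π(H)` is normal in `G` and `O^π(G)` normalizes `H`. -/
def IsDnormal (π : Set ℕ) {G : Type*} [Group G] (H : Subgroup G) : Prop :=
  (π.Subsingleton ∧ H.Normal) ∨
  (¬ π.Subsingleton ∧ (piResidualIn π H).Normal ∧ piResidual π G ≤ Subgroup.normalizer (H : Set G))

/-- `S` is `N^π`-Dsubnormal in `G`: there is a chain `S = S₀ ≤ S₁ ≤ ⋯ ≤ Sₙ = G`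
with each `Sᵢ` being `N^π`-Dnormal in `Sᵢ₊₁`. -/
def IsDsubnormal (π : Set ℕ) {G : Type*} [Group G] (S : Subgroup G) : Prop :=
  ∃ (n : ℕ) (c : Fin (n + 1) → Subgroup G), c 0 = S ∧ c (Fin.last n) = ⊤ ∧
    ∀ i : Fin n, c i.castSucc ≤ c i.succ ∧
      IsDnormal π ((c i.castSucc).subgroupOf (c i.succ))

/-- `H` is subnormal in `G`. -/
def IsSubnormal' {G : Type*} [Group G] (H : Subgroup G) : Prop :=
  ∃ (n : ℕ) (c : Fin (n + 1) → Subgroup G), c 0 = H ∧ c (Fin.last n) = ⊤ ∧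
    ∀ i : Fin n, c i.castSucc ≤ c i.succ ∧
      ((c i.castSucc).subgroupOf (c i.succ)).Normal

/-- The class `N^π`: groups that are the (internal) direct product of a `π`-group and a
nilpotent `π'`-group. -/
def IsNPiGroup (π : Set ℕ) (G : Type*) [Group G] : Prop :=
  ∃ H K : Subgroup G, H.Normal ∧ K.Normal ∧ H ⊓ K = ⊥ ∧ H ⊔ K = ⊤ ∧
    IsPiGroup π H ∧ IsPiGroup πᶜ K ∧ Group.IsNilpotent K

/-- The `N^π`-residual `G^{N^π}`: the smallest normal subgroup of `G` whose quotient
belongs to the class `N^π`. -/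
def nPiResidual (π : Set ℕ) (G : Type*) [Group G] : Subgroup G :=
  ⨅ N ∈ {N : Subgroup G | ∃ h : N.Normal, letI := h; IsNPiGroup π (G ⧸ N)}, N

/-- `G` is `π'`-soluble: it has a normal series each of whose factors is either a
`π`-group or a `p`-group for some prime `p ∉ π`. -/
def IsPiPrimeSoluble (π : Set ℕ) (G : Type*) [Group G] : Prop :=
  ∃ (n : ℕ) (c : Fin (n + 1) → Subgroup G), c 0 = ⊥ ∧ c (Fin.last n) = ⊤ ∧
    ∀ i : Fin n, c i.castSucc ≤ c i.succ ∧
      ((c i.castSucc).subgroupOf (c i.succ)).Normal ∧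
      ((∀ p : ℕ, p.Prime → p ∣ ((c i.castSucc).subgroupOf (c i.succ)).index → p ∈ π) ∨
        ∃ p : ℕ, p.Prime ∧ p ∉ π ∧
          ∃ k : ℕ, ((c i.castSucc).subgroupOf (c i.succ)).index = p ^ k)

/-- An `N^π`-Fitting set of `G`. -/
def IsNPiFittingSet (π : Set ℕ) {G : Type*} [Group G] (F : Set (Subgroup G)) : Prop :=
  F.Nonempty ∧
  (∀ S ∈ F, ∀ T : Subgroup G, T ≤ S → IsDsubnormal π (T.subgroupOf S) → T ∈ F) ∧
  (∀ S ∈ F, ∀ T ∈ F, IsDnormal π (S.subgroupOf (S ⊔ T)) →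
    IsDnormal π (T.subgroupOf (S ⊔ T)) → S ⊔ T ∈ F) ∧
  (∀ S ∈ F, ∀ x : G, S.map (MulAut.conj x).toMonoidHom ∈ F)

/-- The `F`-radical `H_F` of a subgroup `H` of `G`: the join of all subgroups of `H`
belonging to `F` that are normal in `H`. -/
def fittingRadical {G : Type*} [Group G] (F : Set (Subgroup G)) (H : Subgroup G) : Subgroup G :=
  ⨆ S ∈ {S : Subgroup G | S ∈ F ∧ S ≤ H ∧ (S.subgroupOf H).Normal}, S

/-- `M` is an `F`-maximal subgroup of `K`. -/
def IsFMaximalIn {G : Type*} [Group G] (F : Set (Subgroup G)) (M K : Subgroup G) : Prop :=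
  M ∈ F ∧ M ≤ K ∧ ∀ S ∈ F, S ≤ K → M ≤ S → S = M

/-- `V` is an `F`-injector of `G`. -/
def IsInjector {G : Type*} [Group G] (F : Set (Subgroup G)) (V : Subgroup G) : Prop :=
  ∀ K : Subgroup G, IsSubnormal' K → IsFMaximalIn F (V ⊓ K) K

/-- `V` is an `F`-injector of the subgroup `N` of `G`. -/
def IsInjectorIn {G : Type*} [Group G] (F : Set (Subgroup G)) (V N : Subgroup G) : Prop :=
  V ≤ N ∧ ∀ K : Subgroup G, K ≤ N → IsSubnormal' (K.subgroupOf N) → IsFMaximalIn F (V ⊓ K) K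

/-- `M` is an `N^π`-maximal subgroup of `X`. -/
def IsNPiMaximal (π : Set ℕ) {X : Type*} [Group X] (M : Subgroup X) : Prop :=
  IsNPiGroup π M ∧ ∀ M' : Subgroup X, IsNPiGroup π M' → M ≤ M' → M' = M

/-- `U` is an `N^π`-projector of `G`: `UK/K` is `N^π`-maximal in `G/K` for every
normal subgroup `K` of `G`. -/
def IsNPiProjector (π : Set ℕ) {G : Type*} [Group G] (U : Subgroup G) : Prop :=
  ∀ K : Subgroup G, ∀ hK : K.Normal,
    letI := hK
    IsNPiMaximal π ((U ⊔ K).map (QuotientGroup.mk' K))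

/-- An `N^π`-Fitting class of (finite) groups: a non-empty isomorphism-closed class
closed under `N^π`-Dnormal subgroups and under joins of pairs of `N^π`-Dnormal
subgroups. -/
def IsNPiFittingClass (π : Set ℕ) (F : (H : Type) → [_inst : Group H] → Prop) : Prop :=
  (∃ (H : Type) (g : Group H) (_ : Finite H), F H (_inst := g)) ∧
  (∀ (H K : Type) [Group H] [Group K] [Finite H] [Finite K],
    F H → Nonempty (H ≃* K) → F K) ∧
  (∀ (H : Type) [Group H] [Finite H] (N : Subgroup H),
    F H → IsDnormal π N → F ↥N) ∧
  (∀ (H : Type) [Group H] [Finite H] (M N : Subgroup H),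
    F ↥M → F ↥N → IsDnormal π M → IsDnormal π N → M ⊔ N = ⊤ → F H)

namespace NPiAux

/-- `n` is a `π`-number. -/
def PiNat (π : Set ℕ) (n : ℕ) : Prop := ∀ p : ℕ, p.Prime → p ∣ n → p ∈ π

variable {π : Set ℕ}

theorem PiNat.of_dvd {m n : ℕ} (h : m ∣ n) (hn : PiNat π n) : PiNat π m :=
  fun p pp pd => hn p pp (pd.trans h)

theorem PiNat.mul {m n : ℕ} (hm : PiNat π m) (hn : PiNat π n) : PiNat π (m * n) :=
  fun p pp pd => ((Nat.Prime.dvd_mul pp).mp pd).elim (hm p pp) (hn p pp)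

theorem PiNat.one : PiNat π 1 := fun p pp pd => absurd (Nat.le_of_dvd one_pos pd)
  (by have := pp.two_le; omega)

theorem PiNat.eq_one {n : ℕ} (hn : n ≠ 0) (h1 : PiNat π n) (h2 : PiNat πᶜ n) : n = 1 := by
  by_contra h
  obtain ⟨p, pp, pd⟩ := Nat.exists_prime_and_dvd h
  exact (h2 p pp pd) (h1 p pp pd)

theorem PiNat.coprime {m n : ℕ} (hm : PiNat π m) (hn : PiNat πᶜ n) : Nat.Coprime m n := by
  have h1 : PiNat π (Nat.gcd m n) := hm.of_dvd (Nat.gcd_dvd_left m n)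
  have h2 : PiNat πᶜ (Nat.gcd m n) := hn.of_dvd (Nat.gcd_dvd_right m n)
  rcases Nat.eq_zero_or_pos (Nat.gcd m n) with h | h
  · exact absurd (h1 2 Nat.prime_two (h ▸ dvd_zero 2)) (h2 2 Nat.prime_two (h ▸ dvd_zero 2))
  · exact PiNat.eq_one h.ne' h1 h2

variable {G : Type*} [Group G]

theorem isPiGroup_iff {X : Type*} [Group X] : IsPiGroup π X ↔ PiNat π (Nat.card X) := Iff.rfl

theorem isPiGroup_of_le [Finite G] {H K : Subgroup G} (h : H ≤ K) (hK : IsPiGroup π K) :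
    IsPiGroup π H :=
  isPiGroup_iff.mpr ((isPiGroup_iff.mp hK).of_dvd (Subgroup.card_dvd_of_le h))

theorem orderOf_piNat [Finite G] {H : Subgroup G} (hH : IsPiGroup π H) {x : G} (hx : x ∈ H) :
    PiNat π (orderOf x) := by
  rw [← Subgroup.orderOf_mk x hx]
  exact (isPiGroup_iff.mp hH).of_dvd (orderOf_dvd_natCard _)

theorem card_subgroupOf {H K : Subgroup G} (h : H ≤ K) :
    Nat.card (H.subgroupOf K) = Nat.card H :=
  Nat.card_congr (Subgroup.subgroupOfEquivOfLe h).toEquiv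

theorem card_subgroupOf' (N K : Subgroup G) :
    Nat.card (N.subgroupOf K) = Nat.card ↥(N ⊓ K) := by
  have h : (N.subgroupOf K).map K.subtype = N ⊓ K := Subgroup.subgroupOf_map_subtype N K
  rw [← h]
  exact Nat.card_congr (Subgroup.equivMapOfInjective _ _ K.subtype_injective).toEquiv

theorem card_sup_mul_card_inf [Finite G] (H N : Subgroup G) [N.Normal] :
    Nat.card ↥(H ⊔ N) * Nat.card ↥(H ⊓ N) = Nat.card H * Nat.card N := by
  have e := QuotientGroup.quotientInfEquivProdNormalQuotient H N
  have h1 : Nat.card ↥(H ⊔ N) = Nat.card ((↥(H ⊔ N)) ⧸ (N.subgroupOf (H ⊔ N)))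
      * Nat.card (N.subgroupOf (H ⊔ N)) :=
    Subgroup.card_eq_card_quotient_mul_card_subgroup _
  have h2 : Nat.card H = Nat.card ((↥H) ⧸ (N.subgroupOf H))
      * Nat.card (N.subgroupOf H) :=
    Subgroup.card_eq_card_quotient_mul_card_subgroup _
  have h3 : Nat.card ((↥H) ⧸ (N.subgroupOf H))
      = Nat.card ((↥(H ⊔ N)) ⧸ (N.subgroupOf (H ⊔ N))) := Nat.card_congr e.toEquiv
  rw [h1, h2, card_subgroupOf (le_sup_right : N ≤ H ⊔ N), card_subgroupOf' N H, h3]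
  rw [inf_comm N H]
  ring

theorem card_sup_dvd [Finite G] (H N : Subgroup G) [N.Normal] :
    Nat.card ↥(H ⊔ N) ∣ Nat.card H * Nat.card N :=
  Dvd.intro _ (card_sup_mul_card_inf H N)

theorem isPiGroup_sup [Finite G] {H N : Subgroup G} [N.Normal] (hH : IsPiGroup π H)
    (hN : IsPiGroup π N) : IsPiGroup π ↥(H ⊔ N) :=
  isPiGroup_iff.mpr (((isPiGroup_iff.mp hH).mul (isPiGroup_iff.mp hN)).of_dvd
    (card_sup_dvd H N))

theorem inf_eq_bot [Finite G] {H K : Subgroup G} (hH : IsPiGroup π H)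
    (hK : IsPiGroup πᶜ K) : H ⊓ K = ⊥ := by
  rw [← Subgroup.card_eq_one]
  exact Nat.eq_one_of_dvd_coprimes (PiNat.coprime (isPiGroup_iff.mp hH) (isPiGroup_iff.mp hK))
    (Subgroup.card_dvd_of_le inf_le_left) (Subgroup.card_dvd_of_le inf_le_right)

end NPiAux

namespace NPiAux
variable {π : Set ℕ} {G : Type*} [Group G]

/-- The defining set for `piResidual`. -/
def resSet (π : Set ℕ) (G : Type*) [Group G] : Set (Subgroup G) :=
  {N : Subgroup G | N.Normal ∧ ∀ p : ℕ, p.Prime → p ∣ N.index → p ∈ π}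

theorem piResidual_le {N : Subgroup G} (hN : N ∈ resSet π G) : piResidual π G ≤ N :=
  iInf₂_le N hN

theorem resSet_inf [Finite G] {N₁ N₂ : Subgroup G} (h1 : N₁ ∈ resSet π G)
    (h2 : N₂ ∈ resSet π G) : N₁ ⊓ N₂ ∈ resSet π G := by
  haveI := h1.1; haveI := h2.1
  refine ⟨inferInstance, ?_⟩
  have hidx : N₁.relIndex N₂ * N₂.index = (N₁ ⊓ N₂).index := by
    rw [← Subgroup.inf_relIndex_right N₁ N₂]
    exact Subgroup.relIndex_mul_index inf_le_right
  rw [← hidx]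
  exact PiNat.mul ((PiNat.of_dvd (Subgroup.relIndex_dvd_index_of_normal N₁ N₂) h1.2)) h2.2

theorem piResidual_mem [Finite G] : piResidual π G ∈ resSet π G := by
  have hne : (resSet π G).Nonempty := ⟨⊤, ⟨inferInstance, by
    intro p pp pd; rw [Subgroup.index_top] at pd
    exact absurd (Nat.le_of_dvd one_pos pd) (by have := pp.two_le; omega)⟩⟩
  obtain ⟨m, hm, hmin⟩ := Set.exists_min_image (resSet π G) (fun N => Nat.card N)
    (Set.toFinite _) hne
  have hle : ∀ N ∈ resSet π G, m ≤ N := by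
    intro N hN
    have h1 : m ⊓ N ∈ resSet π G := resSet_inf hm hN
    have h2 : Nat.card m ≤ Nat.card ↥(m ⊓ N) := hmin _ h1
    have h3 : m ⊓ N = m := Subgroup.eq_of_le_of_card_ge inf_le_left h2
    exact inf_eq_left.mp h3
  have : piResidual π G = m :=
    le_antisymm (piResidual_le hm) (le_iInf₂ hle)
  rw [this]; exact hm

theorem piResidual_normal [Finite G] : (piResidual π G).Normal := piResidual_mem.1

theorem piResidual_index_piNat [Finite G] : PiNat π (piResidual π G).index :=
  fun p pp pd => piResidual_mem.2 p pp pd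

theorem mem_piResidual_of_orderOf [Finite G] {x : G} (hx : PiNat πᶜ (orderOf x)) :
    x ∈ piResidual π G := by
  rw [piResidual, Subgroup.mem_iInf]
  intro N
  rw [Subgroup.mem_iInf]
  rintro ⟨hNn, hNi⟩
  haveI := hNn
  have h1 : orderOf (QuotientGroup.mk' N x) ∣ orderOf x := orderOf_map_dvd _ x
  have h2 : orderOf (QuotientGroup.mk' N x) ∣ N.index :=
    (Subgroup.index_eq_card N).symm ▸ orderOf_dvd_natCard _
  have h3 : orderOf (QuotientGroup.mk' N x) = 1 := by
    refine PiNat.eq_one ?_ (fun p pp pd => hNi p pp (pd.trans h2)) (hx.of_dvd h1)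
    exact (orderOf_pos _).ne'
  have h4 : QuotientGroup.mk' N x = 1 := orderOf_eq_one_iff.mp h3
  exact (QuotientGroup.eq_one_iff x).mp h4

end NPiAux

namespace NPiAux
variable {π : Set ℕ} {G : Type*} [Group G]

theorem card_map_dvd {H : Type*} [Group H] (f : G →* H) (K : Subgroup G) :
    Nat.card (K.map f) ∣ Nat.card K :=
  Subgroup.card_dvd_of_surjective (f.subgroupMap K) (f.subgroupMap_surjective K)

theorem card_map_injective {H : Type*} [Group H] (f : G →* H)
    (hf : Function.Injective f) (K : Subgroup G) : Nat.card (K.map f) = Nat.card K :=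
  (Nat.card_congr (Subgroup.equivMapOfInjective K f hf).toEquiv).symm

/-- The defining set for `piCore`. -/
def coreSet (π : Set ℕ) (G : Type*) [Group G] : Set (Subgroup G) :=
  {N : Subgroup G | N.Normal ∧ IsPiGroup π N}

theorem le_piCore {N : Subgroup G} (hN : N ∈ coreSet π G) : N ≤ piCore π G :=
  @le_iSup₂ (Subgroup G) _ _ _ (fun N _ => N) N hN

theorem coreSet_sup [Finite G] {N₁ N₂ : Subgroup G} (h1 : N₁ ∈ coreSet π G)
    (h2 : N₂ ∈ coreSet π G) : N₁ ⊔ N₂ ∈ coreSet π G := by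
  haveI := h1.1; haveI := h2.1
  exact ⟨inferInstance, isPiGroup_sup h1.2 h2.2⟩

theorem piCore_mem [Finite G] : piCore π G ∈ coreSet π G := by
  have hne : (coreSet π G).Nonempty := ⟨⊥, ⟨inferInstance, by
    intro p pp pd; rw [Subgroup.card_bot] at pd
    exact absurd (Nat.le_of_dvd one_pos pd) (by have := pp.two_le; omega)⟩⟩
  obtain ⟨m, hm, hmax⟩ := Set.exists_max_image (coreSet π G) (fun N => Nat.card N)
    (Set.toFinite _) hne
  have hle : ∀ N ∈ coreSet π G, N ≤ m := by
    intro N hN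
    have h1 : N ⊔ m ∈ coreSet π G := coreSet_sup hN hm
    have h2 : Nat.card ↥(N ⊔ m) ≤ Nat.card m := hmax _ h1
    have h3 : m = N ⊔ m := Subgroup.eq_of_le_of_card_ge le_sup_right h2
    exact sup_eq_right.mp h3.symm
  have : piCore π G = m := le_antisymm (iSup₂_le hle) (le_piCore hm)
  rw [this]; exact hm

theorem map_piCore_eq [Finite G] (e : G ≃* G) :
    (piCore π G).map e.toMonoidHom = piCore π G := by
  have key : ∀ f : G ≃* G, (piCore π G).map f.toMonoidHom ≤ piCore π G := by
    intro f
    refine le_piCore ⟨?_, ?_⟩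
    · exact (piCore_mem.1).map f.toMonoidHom (f.surjective)
    · exact isPiGroup_iff.mpr ((isPiGroup_iff.mp piCore_mem.2).of_dvd
        (card_map_dvd f.toMonoidHom _))
  refine le_antisymm (key e) ?_
  intro x hx
  have h1 : e.symm x ∈ piCore π G := key e.symm ⟨x, hx, rfl⟩
  exact ⟨e.symm x, h1, e.apply_symm_apply x⟩

/-- `piResidual` of an internally decomposed `N^π`-group is the `π'`-factor. -/
theorem piResidual_eq_of_decomp [Finite G] {H K : Subgroup G} (hHn : H.Normal) (hKn : K.Normal)
    (hinf : H ⊓ K = ⊥) (hsup : H ⊔ K = ⊤) (hHpi : IsPiGroup π H) (hKpi : IsPiGroup πᶜ K) :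
    piResidual π G = K := by
  haveI := hHn; haveI := hKn
  have hcard : Nat.card G = Nat.card H * Nat.card K := by
    have := card_sup_mul_card_inf H K
    rwa [hsup, hinf, Subgroup.card_bot, Subgroup.card_top, mul_one] at this
  refine le_antisymm (piResidual_le ⟨hKn, ?_⟩) ?_
  · intro p pp pd
    have h1 : Nat.card K * K.index = Nat.card G := Subgroup.card_mul_index K
    have h2 : K.index = Nat.card H := by
      have hpos : 0 < Nat.card K := Nat.card_pos
      apply Nat.eq_of_mul_eq_mul_left hpos
      rw [h1, hcard, mul_comm]
    rw [h2] at pd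
    exact hHpi p pp pd
  · intro k hk
    exact mem_piResidual_of_orderOf (orderOf_piNat hKpi hk)

end NPiAux

namespace NPiAux
variable {π : Set ℕ}

/-- If the `π`-residual is central and the group is generated by two `π`-subgroups,
then the group is a `π`-group. -/
theorem piGroup_of_central_residual {X : Type*} [Group X] [Finite X] {A B : Subgroup X}
    (hA : IsPiGroup π A) (hB : IsPiGroup π B) (hsup : A ⊔ B = ⊤)
    (hc : piResidual π X ≤ Subgroup.center X) : IsPiGroup π X := by
  set D := piResidual π X with hD
  set n := (Subgroup.center X).index with hn
  have hnpi : PiNat π n := (piResidual_index_piNat (π := π)).of_dvd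
    (Subgroup.index_dvd_of_le hc)
  set φ := MonoidHom.transferCenterPow X with hφ
  set T : Subgroup ↥(Subgroup.center X) := (⊤ : Subgroup X).map φ with hT
  have hTpi : IsPiGroup π T := by
    have h1 : T = A.map φ ⊔ B.map φ := by rw [hT, ← hsup, Subgroup.map_sup]
    rw [isPiGroup_iff, h1]
    exact (isPiGroup_iff.mp (isPiGroup_sup (N := B.map φ)
      (isPiGroup_iff.mpr ((isPiGroup_iff.mp hA).of_dvd (card_map_dvd φ A)))
      (isPiGroup_iff.mpr ((isPiGroup_iff.mp hB).of_dvd (card_map_dvd φ B)))))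
  have horder : ∀ x ∈ D, PiNat π (orderOf x) := by
    intro x hx
    have hmem : φ x ∈ T := ⟨x, trivial, rfl⟩
    have h1 : PiNat π (orderOf (φ x)) := orderOf_piNat hTpi hmem
    have h2 : orderOf (φ x) = orderOf x / Nat.gcd (orderOf x) n := by
      have : ((φ x : ↥(Subgroup.center X)) : X) = x ^ n := MonoidHom.transferCenterPow_apply x
      rw [← Subgroup.orderOf_coe (φ x), this, orderOf_pow]
    have hg : Nat.gcd (orderOf x) n ∣ n := Nat.gcd_dvd_right _ _
    have : orderOf x = (orderOf x / Nat.gcd (orderOf x) n) * Nat.gcd (orderOf x) n :=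
      (Nat.div_mul_cancel (Nat.gcd_dvd_left _ _)).symm
    rw [this]
    exact (h2 ▸ h1).mul (hnpi.of_dvd hg)
  have hDpi : PiNat π (Nat.card D) := by
    intro p pp pd
    haveI : Fintype ↥D := Fintype.ofFinite _
    haveI : Fact p.Prime := ⟨pp⟩
    obtain ⟨g, hg⟩ := exists_prime_orderOf_dvd_card (G := ↥D) p
      (by rwa [← Nat.card_eq_fintype_card])
    have h1 : orderOf ((g : X)) = p := by rw [Subgroup.orderOf_coe]; exact hg
    exact h1 ▸ horder (g : X) g.2 p pp (h1 ▸ dvd_rfl)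
  intro p pp pd
  have := Subgroup.card_mul_index D
  rw [← this] at pd
  exact (hDpi.mul (piResidual_index_piNat (π := π))) p pp pd

end NPiAux

namespace NPiAux
variable {π : Set ℕ} {G : Type*} [Group G]

theorem subgroupOf_sup_eq_top {A B H : Subgroup G} (hA : A ≤ H) (hB : B ≤ H)
    (h : A ⊔ B = H) : A.subgroupOf H ⊔ B.subgroupOf H = ⊤ := by
  apply Subgroup.map_injective H.subtype_injective
  rw [Subgroup.map_sup, Subgroup.subgroupOf_map_subtype, Subgroup.subgroupOf_map_subtype,
    inf_of_le_left hA, inf_of_le_left hB, h, ← MonoidHom.range_eq_map, H.range_subtype]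

theorem normal_of_le_center {H : Subgroup G} (h : H ≤ Subgroup.center G) : H.Normal := by
  constructor
  intro x hx g
  have hc := Subgroup.mem_center_iff.mp (h hx) g
  rw [hc, mul_assoc, mul_inv_cancel, mul_one]
  exact hx

/-- Generalized key lemma: if the `π`-residual normalizes two `π`-subgroups, their join
is a `π`-group. -/
theorem piGroup_sup_of_residual_normalizer {X : Type*} [Group X] [Finite X]
    {A B : Subgroup X} (hA : IsPiGroup π A) (hB : IsPiGroup π B)
    (hnA : piResidual π X ≤ Subgroup.normalizer (A : Set _)) (hnB : piResidual π X ≤ Subgroup.normalizer (B : Set _)) :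
    IsPiGroup π ↥(A ⊔ B) := by
  classical
  set D := piResidual π X with hD
  haveI hDn : D.Normal := piResidual_normal
  -- the normal π-subgroup W
  set WD := piCore π ↥D with hWD
  set W : Subgroup X := WD.map D.subtype with hW
  have hWle : W ≤ D := Subgroup.map_subtype_le WD
  have hWpi : IsPiGroup π W := by
    rw [isPiGroup_iff, hW, card_map_injective D.subtype D.subtype_injective WD]
    exact isPiGroup_iff.mp piCore_mem.2
  haveI hWn : W.Normal := by
    constructor
    rintro w hw g
    obtain ⟨wd, hwd, rfl⟩ := hw
    have hmem : g * (wd : X) * g⁻¹ ∈ D := hDn.conj_mem _ wd.2 g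
    have : (⟨g * (wd : X) * g⁻¹, hmem⟩ : ↥D) ∈ WD := by
      have h1 : (⟨g * (wd : X) * g⁻¹, hmem⟩ : ↥D) ∈ WD.map (MulAut.conjNormal g).toMonoidHom := by
        exact ⟨wd, hwd, by ext; simp [MulAut.conjNormal_apply]⟩
      rwa [map_piCore_eq (MulAut.conjNormal g : MulAut ↥D)] at h1
    exact ⟨_, this, rfl⟩
  -- commutators of A (resp. B) with D land in W
  have hAD : ∀ C : Subgroup X, IsPiGroup π C → D ≤ Subgroup.normalizer (C : Set _) →
      (∀ a ∈ C, ∀ d ∈ D, a * d * a⁻¹ * d⁻¹ ∈ W) := by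
    intro C hC hnC
    have hCD : C ⊓ D ≤ W := by
      have hsub : (C ⊓ D).subgroupOf D ≤ WD := by
        apply le_piCore
        constructor
        · constructor
          intro x hx n
          have hx' : (x : X) ∈ C ⊓ D := hx
          have hcoe : ((n * x * n⁻¹ : ↥D) : X) = (n : X) * (x : X) * (n : X)⁻¹ := rfl
          refine Subgroup.mem_subgroupOf.mpr ?_
          rw [hcoe]
          refine Subgroup.mem_inf.mpr ⟨(Subgroup.mem_normalizer_iff.mp (hnC n.2) (x : X)).mp hx'.1, ?_⟩
          exact mul_mem (mul_mem n.2 hx'.2) (inv_mem n.2)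
        · rw [isPiGroup_iff, card_subgroupOf (inf_le_right : C ⊓ D ≤ D)]
          exact isPiGroup_iff.mp (isPiGroup_of_le inf_le_left hC)
      calc C ⊓ D = ((C ⊓ D).subgroupOf D).map D.subtype := by
            rw [Subgroup.subgroupOf_map_subtype, inf_of_le_left (inf_le_right : C ⊓ D ≤ D)]
        _ ≤ WD.map D.subtype := Subgroup.map_mono hsub
    intro a ha d hd
    apply hCD
    refine Subgroup.mem_inf.mpr ⟨?_, ?_⟩
    · have h1 : d * a⁻¹ * d⁻¹ ∈ C := (Subgroup.mem_normalizer_iff.mp (hnC hd) a⁻¹).mp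
        (inv_mem ha)
      have : a * d * a⁻¹ * d⁻¹ = a * (d * a⁻¹ * d⁻¹) := by group
      rw [this]
      exact mul_mem ha h1
    · have h1 : a * d * a⁻¹ ∈ D := hDn.conj_mem d hd a
      exact mul_mem h1 (inv_mem hd)
  have keyA := hAD A hA hnA
  have keyB := hAD B hB hnB
  -- pass to the quotient by W
  set mk := QuotientGroup.mk' W with hmk
  set Ab : Subgroup (X ⧸ W) := A.map mk with hAb
  set Bb : Subgroup (X ⧸ W) := B.map mk with hBb
  set Db : Subgroup (X ⧸ W) := D.map mk with hDb
  haveI hDbn : Db.Normal := hDn.map mk (QuotientGroup.mk'_surjective W)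
  -- centrality
  have hcent : ∀ C : Subgroup X, (∀ a ∈ C, ∀ d ∈ D, a * d * a⁻¹ * d⁻¹ ∈ W) →
      C.map mk ≤ Subgroup.centralizer Db := by
    intro C keyC
    rintro _ ⟨a, ha, rfl⟩
    rw [Subgroup.mem_centralizer_iff]
    rintro _ ⟨d, hd, rfl⟩
    show mk d * mk a = mk a * mk d
    rw [← map_mul, ← map_mul]
    have hmemW : (a * d)⁻¹ * (d * a) ∈ W := by
      have h1 := keyC a⁻¹ (inv_mem ha) d⁻¹ (inv_mem hd)
      have h2 : (a * d)⁻¹ * (d * a) = (a⁻¹ * d⁻¹ * (a⁻¹)⁻¹ * (d⁻¹)⁻¹)⁻¹ := by group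
      rw [h2]
      exact inv_mem h1
    exact (QuotientGroup.eq.mpr hmemW).symm
  have hcentA := hcent A keyA
  have hcentB := hcent B keyB
  -- the image of A ⊔ B is a π-group by the transfer lemma
  set Hb : Subgroup (X ⧸ W) := Ab ⊔ Bb with hHb
  have hHbpi : IsPiGroup π ↥Hb := by
    apply piGroup_of_central_residual (π := π) (A := Ab.subgroupOf Hb) (B := Bb.subgroupOf Hb)
    · rw [isPiGroup_iff, card_subgroupOf (le_sup_left : Ab ≤ Hb)]
      exact (isPiGroup_iff.mp hA).of_dvd (card_map_dvd mk A)
    · rw [isPiGroup_iff, card_subgroupOf (le_sup_right : Bb ≤ Hb)]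
      exact (isPiGroup_iff.mp hB).of_dvd (card_map_dvd mk B)
    · exact subgroupOf_sup_eq_top le_sup_left le_sup_right rfl
    · -- residual of Hb is inside the central subgroup Db.subgroupOf Hb
      have hEc : Db.subgroupOf Hb ≤ Subgroup.center ↥Hb := by
        intro x hx
        rw [Subgroup.mem_center_iff]
        intro y
        have h1 : (y : X ⧸ W) ∈ Subgroup.centralizer Db :=
          (sup_le hcentA hcentB) y.2
        have := Subgroup.mem_centralizer_iff.mp h1 (x : X ⧸ W) hx
        exact Subtype.ext this.symm
      refine le_trans (piResidual_le ⟨normal_of_le_center hEc, ?_⟩) hEc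
      intro p pp pd
      have h1 : (Db.subgroupOf Hb).index = Db.relIndex Hb := rfl
      have h2 : Db.relIndex Hb ∣ Db.index := Subgroup.relIndex_dvd_index_of_normal Db Hb
      have h3 : Db.index = D.index := by
        rw [hDb, Subgroup.index_map, QuotientGroup.ker_mk',
          sup_eq_left.mpr hWle, MonoidHom.range_eq_top.mpr (QuotientGroup.mk'_surjective W),
          Subgroup.index_top, mul_one]
      rw [h1] at pd
      exact piResidual_index_piNat p pp (pd.trans (h3 ▸ h2))
  -- pull back
  set K := A ⊔ B with hK
  set ψ : ↥K →* X ⧸ W := mk.comp K.subtype with hψ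
  have hker : ψ.ker = W.subgroupOf K := by
    show (mk.comp K.subtype).ker = W.subgroupOf K
    rw [← MonoidHom.comap_ker, QuotientGroup.ker_mk' W]
    rfl
  have hrange : ψ.range = Hb := by
    show (mk.comp K.subtype).range = Ab ⊔ Bb
    rw [MonoidHom.range_comp, K.range_subtype]
    show Subgroup.map mk (A ⊔ B) = _
    rw [Subgroup.map_sup]
  have hcard : Nat.card ↥K = Nat.card (↥K ⧸ ψ.ker) * Nat.card ψ.ker :=
    Subgroup.card_eq_card_quotient_mul_card_subgroup _
  have hq : Nat.card (↥K ⧸ ψ.ker) = Nat.card Hb := by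
    rw [← hrange]
    exact Nat.card_congr (QuotientGroup.quotientKerEquivRange ψ).toEquiv
  rw [isPiGroup_iff]
  rw [hcard, hq, hker]
  refine PiNat.mul (isPiGroup_iff.mp hHbpi) ?_
  rw [card_subgroupOf' W K]
  exact (isPiGroup_iff.mp hWpi).of_dvd (Subgroup.card_dvd_of_le inf_le_left)

end NPiAux

namespace NPiAux
variable {π : Set ℕ} {G : Type*} [Group G]

theorem orderOf_conj (g x : G) : orderOf (g * x * g⁻¹) = orderOf x := by
  have := orderOf_injective (MulAut.conj g).toMonoidHom (MulEquiv.injective _) x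
  simpa [MulAut.conj_apply] using this

/-- The set of `p`-elements of a finite nilpotent subgroup is a subgroup realizing the
full `p`-part of the order. -/
theorem exists_pPart [Finite G] (R : Subgroup G) (hnil : Group.IsNilpotent ↥R) (p : ℕ)
    (hp : p.Prime) : ∃ W : Subgroup G,
      (∀ x : G, x ∈ W ↔ x ∈ R ∧ ∃ k : ℕ, orderOf x = p ^ k) ∧
      Nat.card W = p ^ ((Nat.card R).factorization p) := by
  haveI : Fact p.Prime := ⟨hp⟩
  haveI := hnil
  obtain ⟨P⟩ : Nonempty (Sylow p ↥R) := Sylow.nonempty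
  have htfae := (isNilpotent_of_finite_tfae (G := ↥R)).out 0 3
  have hPn : (P : Subgroup ↥R).Normal := htfae.mp hnil p ⟨hp⟩ P
  haveI := hPn
  have hchar : ∀ y : ↥R, y ∈ (P : Subgroup ↥R) ↔ ∃ k : ℕ, orderOf y = p ^ k := by
    intro y
    constructor
    · intro hy
      obtain ⟨k, hk⟩ := (IsPGroup.iff_orderOf.mp P.isPGroup') ⟨y, hy⟩
      rw [Subgroup.orderOf_mk] at hk
      exact ⟨k, hk⟩
    · rintro ⟨k, hk⟩
      have hZ : IsPGroup p ↥(Subgroup.zpowers y ⊔ (P : Subgroup ↥R)) := by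
        obtain ⟨m, hm⟩ := IsPGroup.iff_card.mp P.isPGroup'
        have hdvd : Nat.card ↥(Subgroup.zpowers y ⊔ (P : Subgroup ↥R)) ∣ p ^ k * p ^ m := by
          rw [← hk, ← hm, ← Nat.card_zpowers]
          exact card_sup_dvd _ _
        rw [← pow_add] at hdvd
        obtain ⟨j, _, hj⟩ := (Nat.dvd_prime_pow hp).mp hdvd
        exact IsPGroup.of_card hj
      have heq := P.is_maximal' hZ le_sup_right
      have : y ∈ Subgroup.zpowers y ⊔ (P : Subgroup ↥R) :=
        Subgroup.mem_sup_left (Subgroup.mem_zpowers y)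
      rwa [heq] at this
  refine ⟨(P : Subgroup ↥R).map R.subtype, ?_, ?_⟩
  · intro x
    constructor
    · rintro ⟨y, hy, rfl⟩
      refine ⟨y.2, ?_⟩
      show ∃ k, orderOf (y : G) = p ^ k
      rw [Subgroup.orderOf_coe]
      exact (hchar y).mp hy
    · rintro ⟨hxR, k, hk⟩
      refine ⟨⟨x, hxR⟩, (hchar _).mpr ⟨k, by rwa [Subgroup.orderOf_mk]⟩, rfl⟩
  · rw [card_map_injective R.subtype R.subtype_injective]
    exact Sylow.card_eq_multiplicity P

/-- Fitting's theorem for two normal nilpotent subgroups generating the group. -/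
theorem fitting_sup_eq_top [Finite G] {U V : Subgroup G} (hUn : U.Normal) (hVn : V.Normal)
    (hUnil : Group.IsNilpotent ↥U) (hVnil : Group.IsNilpotent ↥V) (hsup : U ⊔ V = ⊤) :
    Group.IsNilpotent G := by
  apply ((isNilpotent_of_finite_tfae (G := G)).out 3 0).mp
  intro p hp P
  have hpp := hp.out
  have hIVnil : Group.IsNilpotent ↥(U ⊓ V) := by
    haveI := hUnil
    exact nilpotent_of_mulEquiv (Subgroup.subgroupOfEquivOfLe (inf_le_left : U ⊓ V ≤ U))
  obtain ⟨WU, hWUc, hWUcard⟩ := exists_pPart U hUnil p hpp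
  obtain ⟨WV, hWVc, hWVcard⟩ := exists_pPart V hVnil p hpp
  obtain ⟨WI, hWIc, hWIcard⟩ := exists_pPart (U ⊓ V) hIVnil p hpp
  have hnormW : ∀ (R : Subgroup G) (W : Subgroup G), R.Normal →
      (∀ x : G, x ∈ W ↔ x ∈ R ∧ ∃ k : ℕ, orderOf x = p ^ k) → W.Normal := by
    intro R W hRn hWc
    constructor
    intro x hx g
    obtain ⟨hxR, k, hk⟩ := (hWc x).mp hx
    exact (hWc _).mpr ⟨hRn.conj_mem x hxR g, k, by rwa [orderOf_conj]⟩
  have hWUn : WU.Normal := hnormW U WU hUn hWUc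
  have hWVn : WV.Normal := hnormW V WV hVn hWVc
  haveI := hWUn; haveI := hWVn
  have hinfW : WU ⊓ WV = WI := by
    ext x
    simp only [Subgroup.mem_inf, hWUc, hWVc, hWIc]
    tauto
  -- X = WU ⊔ WV is a normal p-subgroup with the full p-part of |G|
  set X := WU ⊔ WV with hX
  haveI hXn : X.Normal := Subgroup.sup_normal WU WV
  have hXcard : ∃ j, Nat.card X = p ^ j := by
    have hdvd : Nat.card X ∣ Nat.card WU * Nat.card WV := card_sup_dvd WU WV
    rw [hWUcard, hWVcard, ← pow_add] at hdvd
    obtain ⟨j, _, hj⟩ := (Nat.dvd_prime_pow hpp).mp hdvd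
    exact ⟨j, hj⟩
  obtain ⟨j, hj⟩ := hXcard
  have hXpG : IsPGroup p X := IsPGroup.of_card hj
  -- compute j
  have hcards : Nat.card X * Nat.card ↥(WU ⊓ WV) = Nat.card WU * Nat.card WV :=
    card_sup_mul_card_inf WU WV
  have hGcards : Nat.card G * Nat.card ↥(U ⊓ V) = Nat.card U * Nat.card V := by
    have := card_sup_mul_card_inf U V
    rwa [hsup, Subgroup.card_top] at this
  have hfact : (Nat.card G).factorization p + (Nat.card ↥(U ⊓ V)).factorization p
      = (Nat.card U).factorization p + (Nat.card V).factorization p := by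
    have h0 : Nat.card G ≠ 0 := Nat.card_pos.ne'
    have h1 : Nat.card ↥(U ⊓ V) ≠ 0 := Nat.card_pos.ne'
    have h2 : Nat.card U ≠ 0 := Nat.card_pos.ne'
    have h3 : Nat.card V ≠ 0 := Nat.card_pos.ne'
    have key : ∀ a b : ℕ, a ≠ 0 → b ≠ 0 →
        (a * b).factorization p = a.factorization p + b.factorization p := by
      intro a b ha hb
      rw [Nat.factorization_mul ha hb]
      rfl
    have heq : (Nat.card G * Nat.card ↥(U ⊓ V)).factorization p
        = (Nat.card U * Nat.card V).factorization p := by rw [hGcards]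
    rwa [key _ _ h0 h1, key _ _ h2 h3] at heq
  have hjval : j + (Nat.card ↥(U ⊓ V)).factorization p
      = (Nat.card U).factorization p + (Nat.card V).factorization p := by
    have := hcards
    rw [hj, hinfW, hWIcard, hWUcard, hWVcard, ← pow_add, ← pow_add] at this
    exact Nat.pow_right_injective hpp.two_le this
  have hjG : j = (Nat.card G).factorization p := by omega
  -- X is a normal Sylow subgroup, so P = X
  obtain ⟨Q, hXQ⟩ := hXpG.exists_le_sylow
  have hQcard : Nat.card ↥(Q : Subgroup G) = p ^ j := by
    rw [Sylow.card_eq_multiplicity Q, hjG]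
  have hXQeq : X = (Q : Subgroup G) := by
    apply Subgroup.eq_of_le_of_card_ge hXQ
    rw [hQcard, hj]
  have hQn : (Q : Subgroup G).Normal := hXQeq ▸ hXn
  haveI : Finite (Sylow p G) :=
    Finite.of_injective (fun P : Sylow p G => (P : Subgroup G))
      (fun _ _ h => Sylow.ext h)
  haveI := Sylow.unique_of_normal Q hQn
  have : P = Q := Subsingleton.elim P Q
  rw [this]
  exact hQn

end NPiAux

namespace NPiAux
variable {π : Set ℕ} {G : Type*} [Group G]

/-- A finite nilpotent group is in `N^π`. -/
theorem isNPiGroup_of_nilpotent [Finite G] (h : Group.IsNilpotent G) : IsNPiGroup π G := by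
  classical
  set H := piCore π G with hH
  set K := piCore πᶜ G with hK
  have hHm := piCore_mem (π := π) (G := G)
  have hKm := piCore_mem (π := πᶜ) (G := G)
  refine ⟨H, K, hHm.1, hKm.1, inf_eq_bot hHm.2 hKm.2, ?_, hHm.2, hKm.2, Subgroup.isNilpotent K⟩
  -- H ⊔ K = ⊤
  rw [← Subgroup.index_eq_one]
  by_contra hne
  have hne0 : (H ⊔ K).index ≠ 0 := Subgroup.FiniteIndex.index_ne_zero
  obtain ⟨q, hq, hqd⟩ := Nat.exists_prime_and_dvd hne
  haveI : Fact q.Prime := ⟨hq⟩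
  obtain ⟨P⟩ : Nonempty (Sylow q G) := Sylow.nonempty
  have htfae := (isNilpotent_of_finite_tfae (G := G)).out 0 3
  have hPn : (P : Subgroup G).Normal := htfae.mp h q ⟨hq⟩ P
  obtain ⟨n, hn⟩ := IsPGroup.iff_card.mp P.isPGroup'
  have hPq : ∀ r : ℕ, r.Prime → r ∣ Nat.card ↥(P : Subgroup G) → r = q := by
    intro r hr hrd
    rw [hn] at hrd
    exact (Nat.prime_dvd_prime_iff_eq hr hq).mp (hr.dvd_of_dvd_pow hrd)
  have hPle : (P : Subgroup G) ≤ H ⊔ K := by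
    by_cases hqπ : q ∈ π
    · refine le_trans (le_piCore (π := π) ⟨hPn, ?_⟩) le_sup_left
      intro r hr hrd; rwa [hPq r hr hrd]
    · refine le_trans (le_piCore (π := πᶜ) ⟨hPn, ?_⟩) le_sup_right
      intro r hr hrd; rw [hPq r hr hrd]; exact hqπ
  have hdvd1 : Nat.card ↥(P : Subgroup G) ∣ Nat.card ↥(H ⊔ K) := Subgroup.card_dvd_of_le hPle
  rw [Sylow.card_eq_multiplicity P] at hdvd1
  have hmul : Nat.card ↥(H ⊔ K) * (H ⊔ K).index = Nat.card G := Subgroup.card_mul_index _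
  have hkey : q ^ ((Nat.card G).factorization q + 1) ∣ Nat.card ↥(H ⊔ K) * (H ⊔ K).index := by
    rw [pow_succ]
    exact mul_dvd_mul hdvd1 hqd
  rw [hmul] at hkey
  exact Nat.pow_succ_factorization_not_dvd (Nat.card_pos.ne') hq hkey

/-- A finite `π`-group with `π` subsingleton is nilpotent. -/
theorem nilpotent_of_piGroup_subsingleton {X : Type*} [Group X] [Finite X]
    (hsub : π.Subsingleton) (h : IsPiGroup π X) : Group.IsNilpotent X := by
  by_cases hc : Nat.card X = 1
  · haveI : Subsingleton X := (Nat.card_eq_one_iff_unique.mp hc).1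
    exact ⟨0, Subsingleton.elim _ _⟩
  · obtain ⟨q, hq, hqd⟩ := Nat.exists_prime_and_dvd hc
    have hqπ : q ∈ π := h q hq hqd
    haveI : Fact q.Prime := ⟨hq⟩
    have hpg : IsPGroup q X := by
      apply IsPGroup.of_card (n := (Nat.card X).primeFactorsList.length)
      exact Nat.eq_prime_pow_of_unique_prime_dvd Nat.card_pos.ne'
        (fun {d} hd hdd => hsub (h d hd hdd) hqπ)
    exact hpg.isNilpotent

/-- Any subgroup of a finite `N^π`-group is an `N^π`-group. -/
theorem isNPiGroup_subgroup [Finite G] (h : IsNPiGroup π G) (T : Subgroup G) :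
    IsNPiGroup π ↥T := by
  obtain ⟨H, K, hHn, hKn, hinf, hsup, hHpi, hKpi, hKnil⟩ := h
  haveI := hHn; haveI := hKn
  refine ⟨H.subgroupOf T, K.subgroupOf T, hHn.subgroupOf T, hKn.subgroupOf T, ?_, ?_, ?_, ?_, ?_⟩
  · rw [eq_bot_iff]
    intro x hx
    obtain ⟨h1, h2⟩ := Subgroup.mem_inf.mp hx
    have hx' : (x : G) ∈ H ⊓ K := Subgroup.mem_inf.mpr ⟨h1, h2⟩
    rw [hinf, Subgroup.mem_bot] at hx'
    rw [Subgroup.mem_bot]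
    exact Subtype.ext hx'
  · -- sup is everything
    rw [eq_top_iff]
    rintro ⟨t, ht⟩ -
    have htmem : t ∈ (↑(H ⊔ K) : Set G) := hsup ▸ Subgroup.mem_top t
    rw [Subgroup.mul_normal H K] at htmem
    obtain ⟨h', hh', k, hk, rfl⟩ := htmem
    have hcomm : Commute h' k :=
      Subgroup.commute_of_normal_of_disjoint H K hHn hKn (disjoint_iff.mpr hinf) h' k hh' hk
    have hcop : Nat.Coprime (orderOf k) (orderOf h') := by
      have h1 : PiNat πᶜ (orderOf k) := orderOf_piNat hKpi hk
      have h2 : PiNat π (orderOf h') := orderOf_piNat hHpi hh'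
      exact Nat.Coprime.symm (PiNat.coprime h2 h1)
    have hpow : (h' * k) ^ orderOf k = h' ^ orderOf k := by
      rw [hcomm.mul_pow, pow_orderOf_eq_one, mul_one]
    obtain ⟨m, hm⟩ := exists_pow_eq_self_of_coprime hcop
    have hh'T : h' ∈ T := by
      have h1 : (h' * k) ^ orderOf k ∈ T := pow_mem ht _
      rw [hpow] at h1
      rw [← hm]
      exact pow_mem h1 m
    have hkT : k ∈ T := by
      have : k = h'⁻¹ * (h' * k) := by group
      rw [this]
      exact mul_mem (inv_mem hh'T) ht
    have e1 : (⟨h' * k, ht⟩ : ↥T) = ⟨h', hh'T⟩ * ⟨k, hkT⟩ := rfl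
    rw [e1]
    exact mul_mem (Subgroup.mem_sup_left (Subgroup.mem_subgroupOf.mpr hh'))
      (Subgroup.mem_sup_right (Subgroup.mem_subgroupOf.mpr hk))
  · rw [isPiGroup_iff, card_subgroupOf' H T]
    exact (isPiGroup_iff.mp hHpi).of_dvd (Subgroup.card_dvd_of_le inf_le_left)
  · rw [isPiGroup_iff, card_subgroupOf' K T]
    exact (isPiGroup_iff.mp hKpi).of_dvd (Subgroup.card_dvd_of_le inf_le_left)
  · -- nilpotency of K.subgroupOf T
    haveI := hKnil
    have e1 : ↥((K ⊓ T).subgroupOf K) ≃* ↥(K ⊓ T) :=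
      Subgroup.subgroupOfEquivOfLe inf_le_left
    have h1 : Group.IsNilpotent ↥((K ⊓ T).subgroupOf K) := Subgroup.isNilpotent _
    have h2 : Group.IsNilpotent ↥(K ⊓ T) := nilpotent_of_mulEquiv e1
    have e2 : ↥(K.subgroupOf T) ≃* ↥(K ⊓ T) := by
      have h3 : (K.subgroupOf T).map T.subtype = K ⊓ T := Subgroup.subgroupOf_map_subtype K T
      exact (Subgroup.equivMapOfInjective _ _ T.subtype_injective).trans
        (MulEquiv.subgroupCongr h3)
    exact nilpotent_of_mulEquiv e2.symm

end NPiAux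

namespace NPiAux
variable {π : Set ℕ} {G : Type*} [Group G]

theorem npi_decomp [Finite G] {M : Subgroup G} (h : IsNPiGroup π ↥M) :
    ∃ A U : Subgroup G, A ≤ M ∧ U ≤ M ∧ A ⊔ U = M ∧
      IsPiGroup π A ∧ IsPiGroup πᶜ U ∧ Group.IsNilpotent ↥U ∧
      piResidualIn π M = U ∧
      (∀ x : G, x ∈ A ↔ x ∈ M ∧ PiNat π (orderOf x)) ∧
      (∀ a ∈ A, ∀ u ∈ U, a * u = u * a) := by
  obtain ⟨HM, KM, hHn, hKn, hinf, hsup, hHpi, hKpi, hKnil⟩ := h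
  refine ⟨HM.map M.subtype, KM.map M.subtype, Subgroup.map_subtype_le HM,
    Subgroup.map_subtype_le KM, ?_, ?_, ?_, ?_, ?_, ?_, ?_⟩
  · rw [← Subgroup.map_sup, hsup, ← MonoidHom.range_eq_map, Subgroup.range_subtype]
  · rw [isPiGroup_iff, card_map_injective M.subtype M.subtype_injective]
    exact isPiGroup_iff.mp hHpi
  · rw [isPiGroup_iff, card_map_injective M.subtype M.subtype_injective]
    exact isPiGroup_iff.mp hKpi
  · haveI := hKnil
    exact nilpotent_of_mulEquiv (Subgroup.equivMapOfInjective KM M.subtype M.subtype_injective)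
  · rw [piResidualIn, piResidual_eq_of_decomp hHn hKn hinf hsup hHpi hKpi]
  · -- characterization of A as the π-elements of M
    have hApi : IsPiGroup π (HM.map M.subtype) := by
      rw [isPiGroup_iff, card_map_injective M.subtype M.subtype_injective]
      exact isPiGroup_iff.mp hHpi
    intro x
    constructor
    · intro hx
      have h2 := orderOf_piNat hApi hx
      obtain ⟨y, _, rfl⟩ := hx
      exact ⟨y.2, h2⟩
    · rintro ⟨hxM, hord⟩
      have hmem : (⟨x, hxM⟩ : ↥M) ∈ (↑(HM ⊔ KM) : Set ↥M) := hsup ▸ Subgroup.mem_top _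
      rw [Subgroup.mul_normal HM KM] at hmem
      obtain ⟨h', hh', k, hk, hprod⟩ := hmem
      have hxeq : x = (h' : G) * (k : G) := by
        have := congrArg (fun z : ↥M => (z : G)) hprod
        exact this.symm
      have hcomm : Commute (h' : G) (k : G) := by
        have hc := Subgroup.commute_of_normal_of_disjoint HM KM hHn hKn
          (disjoint_iff.mpr hinf) h' k hh' hk
        exact congrArg (fun z : ↥M => (z : G)) hc
      have hh'A : (h' : G) ∈ HM.map M.subtype := ⟨h', hh', rfl⟩
      have hkU : (k : G) ∈ KM.map M.subtype := ⟨k, hk, rfl⟩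
      have hKUpi : IsPiGroup πᶜ (KM.map M.subtype) := by
        rw [isPiGroup_iff, card_map_injective M.subtype M.subtype_injective]
        exact isPiGroup_iff.mp hKpi
      have hcop : Nat.Coprime (orderOf (h' : G)) (orderOf (k : G)) :=
        PiNat.coprime (orderOf_piNat hApi hh'A) (orderOf_piNat hKUpi hkU)
      have hords : orderOf x = orderOf (h' : G) * orderOf (k : G) := by
        rw [hxeq]
        exact hcomm.orderOf_mul_eq_mul_orderOf_of_coprime hcop
      have hk1 : orderOf (k : G) = 1 := by
        refine PiNat.eq_one (orderOf_pos (k : G)).ne' ?_ (orderOf_piNat hKUpi hkU)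
        exact (hord.of_dvd (hords ▸ dvd_mul_left _ _))
      have : (k : G) = 1 := orderOf_eq_one_iff.mp hk1
      rw [hxeq, this, mul_one]
      exact hh'A
  · rintro _ ⟨a, ha, rfl⟩ _ ⟨u, hu, rfl⟩
    have hc := Subgroup.commute_of_normal_of_disjoint HM KM hHn hKn
      (disjoint_iff.mpr hinf) a u ha hu
    have := congrArg (fun z : ↥M => (z : G)) hc
    simpa using this

end NPiAux

open NPiAux in
/-- Remark 2.13(3): the class `N^π` is an `N^π`-Fitting class. -/
theorem nPi_is_nPi_fitting_class (π : Set ℕ) (hπ : ∀ p ∈ π, p.Prime) :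
    (∀ (G : Type) [Group G] [Finite G] (N : Subgroup G),
      IsNPiGroup π G → IsDnormal π N → IsNPiGroup π ↥N) ∧
    (∀ (G : Type) [Group G] [Finite G] (M N : Subgroup G),
      IsDnormal π M → IsDnormal π N → M ⊔ N = ⊤ →
      IsNPiGroup π ↥M → IsNPiGroup π ↥N → IsNPiGroup π G) := by
  constructor
  · intro G _ _ N hG _
    exact isNPiGroup_subgroup hG N
  · intro G _ _ M N hdM hdN hsup hM hN
    by_cases hss : π.Subsingleton
    · -- |π| ≤ 1 : everything is nilpotent, use Fitting's theorem
      have hMn : M.Normal := by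
        rcases hdM with ⟨_, h⟩ | ⟨h, _⟩
        · exact h
        · exact absurd hss h
      have hNn : N.Normal := by
        rcases hdN with ⟨_, h⟩ | ⟨h, _⟩
        · exact h
        · exact absurd hss h
      have hMnil : Group.IsNilpotent ↥M := by
        obtain ⟨H, K, hHn, hKn, hinf, hsup', hHpi, hKpi, hKnil⟩ := hM
        exact fitting_sup_eq_top hHn hKn
          (nilpotent_of_piGroup_subsingleton hss hHpi) hKnil hsup'
      have hNnil : Group.IsNilpotent ↥N := by
        obtain ⟨H, K, hHn, hKn, hinf, hsup', hHpi, hKpi, hKnil⟩ := hN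
        exact fitting_sup_eq_top hHn hKn
          (nilpotent_of_piGroup_subsingleton hss hHpi) hKnil hsup'
      exact isNPiGroup_of_nilpotent (fitting_sup_eq_top hMn hNn hMnil hNnil hsup)
    · -- |π| ≥ 2
      obtain ⟨hUn, hDM⟩ : (piResidualIn π M).Normal ∧ piResidual π G ≤ Subgroup.normalizer (M : Set _) := by
        rcases hdM with ⟨h, _⟩ | ⟨_, h1, h2⟩
        · exact absurd h hss
        · exact ⟨h1, h2⟩
      obtain ⟨hVn, hDN⟩ : (piResidualIn π N).Normal ∧ piResidual π G ≤ Subgroup.normalizer (N : Set _) := by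
        rcases hdN with ⟨h, _⟩ | ⟨_, h1, h2⟩
        · exact absurd h hss
        · exact ⟨h1, h2⟩
      obtain ⟨A, U, hAM, hUM, hAUM, hApi, hUpi, hUnil, hUres, hAchar, hAUcomm⟩ := npi_decomp hM
      obtain ⟨B, V, hBN, hVN, hBVN, hBpi, hVpi, hVnil, hVres, hBchar, hBVcomm⟩ := npi_decomp hN
      haveI hUnormal : U.Normal := hUres ▸ hUn
      haveI hVnormal : V.Normal := hVres ▸ hVn
      -- the π-residual of G normalizes A and B
      have hnormalizes : ∀ (C R : Subgroup G), piResidual π G ≤ Subgroup.normalizer (R : Set _) →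
          (∀ x : G, x ∈ C ↔ x ∈ R ∧ PiNat π (orderOf x)) →
          piResidual π G ≤ Subgroup.normalizer (C : Set _) := by
        intro C R hDR hchar d hd
        rw [Subgroup.mem_normalizer_iff]
        intro x
        constructor
        · intro hx
          obtain ⟨hxR, hord⟩ := (hchar x).mp hx
          exact (hchar _).mpr ⟨(Subgroup.mem_normalizer_iff.mp (hDR hd) x).mp hxR,
            by rwa [orderOf_conj]⟩
        · intro hx
          obtain ⟨hxR, hord⟩ := (hchar _).mp hx
          refine (hchar x).mpr ⟨?_, by rwa [orderOf_conj] at hord⟩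
          have h1 := (Subgroup.mem_normalizer_iff.mp (hDR (inv_mem hd)) (d * x * d⁻¹)).mp hxR
          have h2 : d⁻¹ * (d * x * d⁻¹) * d⁻¹⁻¹ = x := by group
          rwa [h2] at h1
      have hDA : piResidual π G ≤ Subgroup.normalizer (A : Set _) := hnormalizes A M hDM hAchar
      have hDB : piResidual π G ≤ Subgroup.normalizer (B : Set _) := hnormalizes B N hDN hBchar
      -- U and V are in the residual
      have hUD : U ≤ piResidual π G := fun u hu =>
        mem_piResidual_of_orderOf (orderOf_piNat hUpi hu)
      have hVD : V ≤ piResidual π G := fun v hv =>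
        mem_piResidual_of_orderOf (orderOf_piNat hVpi hv)
      -- cross commutation
      have hcross : ∀ (C W : Subgroup G), IsPiGroup π C → IsPiGroup πᶜ W → W.Normal →
          W ≤ piResidual π G → piResidual π G ≤ Subgroup.normalizer (C : Set _) →
          (∀ c ∈ C, ∀ w ∈ W, c * w = w * c) := by
        intro C W hCpi hWpi hWn hWD hDC c hc w hw
        have h1 : c * w * c⁻¹ * w⁻¹ ∈ C ⊓ W := by
          refine Subgroup.mem_inf.mpr ⟨?_, ?_⟩
          · have h2 : w * c⁻¹ * w⁻¹ ∈ C :=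
              (Subgroup.mem_normalizer_iff.mp (hDC (hWD hw)) c⁻¹).mp (inv_mem hc)
            have h3 : c * w * c⁻¹ * w⁻¹ = c * (w * c⁻¹ * w⁻¹) := by group
            rw [h3]
            exact mul_mem hc h2
          · exact mul_mem (hWn.conj_mem w hw c) (inv_mem hw)
        rw [inf_eq_bot hCpi hWpi, Subgroup.mem_bot] at h1
        have h4 : c * w * c⁻¹ * w⁻¹ = (c * w) * (w * c)⁻¹ := by group
        rw [h4] at h1
        exact mul_inv_eq_one.mp h1
      have hAV : ∀ a ∈ A, ∀ v ∈ V, a * v = v * a := hcross A V hApi hVpi hVnormal hVD hDA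
      have hBU : ∀ b ∈ B, ∀ u ∈ U, b * u = u * b := hcross B U hBpi hUpi hUnormal hUD hDB
      -- assemble
      set H : Subgroup G := A ⊔ B with hH
      set L : Subgroup G := U ⊔ V with hL
      have hHpi : IsPiGroup π ↥H := piGroup_sup_of_residual_normalizer hApi hBpi hDA hDB
      haveI hLnormal : L.Normal := Subgroup.sup_normal U V
      have hLpi : IsPiGroup πᶜ ↥L := isPiGroup_sup hUpi hVpi
      have hLnil : Group.IsNilpotent ↥L := by
        have e1 : ↥(U.subgroupOf L) ≃* ↥U := Subgroup.subgroupOfEquivOfLe le_sup_left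
        have e2 : ↥(V.subgroupOf L) ≃* ↥V := Subgroup.subgroupOfEquivOfLe le_sup_right
        exact fitting_sup_eq_top (hUnormal.subgroupOf L) (hVnormal.subgroupOf L)
          (nilpotent_of_mulEquiv e1.symm) (nilpotent_of_mulEquiv e2.symm)
          (subgroupOf_sup_eq_top le_sup_left le_sup_right rfl)
      -- H centralizes L
      have hHcent : H ≤ Subgroup.centralizer (L : Set G) := by
        have hLA : L ≤ Subgroup.centralizer (A : Set G) := by
          refine sup_le ?_ ?_
          · intro u hu
            rw [Subgroup.mem_centralizer_iff]
            intro a ha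
            exact hAUcomm a ha u hu
          · intro v hv
            rw [Subgroup.mem_centralizer_iff]
            intro a ha
            exact hAV a ha v hv
        have hLB : L ≤ Subgroup.centralizer (B : Set G) := by
          refine sup_le ?_ ?_
          · intro u hu
            rw [Subgroup.mem_centralizer_iff]
            intro b hb
            exact hBU b hb u hu
          · intro v hv
            rw [Subgroup.mem_centralizer_iff]
            intro b hb
            exact hBVcomm b hb v hv
        refine sup_le ?_ ?_
        · intro a ha
          rw [Subgroup.mem_centralizer_iff]
          intro l hl
          exact (Subgroup.mem_centralizer_iff.mp (hLA hl) a ha).symm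
        · intro b hb
          rw [Subgroup.mem_centralizer_iff]
          intro l hl
          exact (Subgroup.mem_centralizer_iff.mp (hLB hl) b hb).symm
      have hHLsup : H ⊔ L = ⊤ := by
        rw [hH, hL, sup_sup_sup_comm, hAUM, hBVN, hsup]
      have hHnormal : H.Normal := by
        constructor
        intro x hx g
        have hg : g ∈ (↑(H ⊔ L) : Set G) := by
          rw [hHLsup]
          trivial
        rw [Subgroup.mul_normal H L] at hg
        obtain ⟨h, hh, l, hl, rfl⟩ := hg
        have hcomm : l * x = x * l := Subgroup.mem_centralizer_iff.mp (hHcent hx) l hl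
        have hlx : l * x * l⁻¹ = x := by rw [hcomm]; group
        have heq : h * l * x * (h * l)⁻¹ = h * (l * x * l⁻¹) * h⁻¹ := by group
        rw [heq, hlx]
        exact mul_mem (mul_mem hh hx) (inv_mem hh)
      exact ⟨H, L, hHnormal, hLnormal, inf_eq_bot hHpi hLpi, hHLsup, hHpi, hLpi, hLnil⟩
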